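/- (Paired observed contrast identity, Equation (4).) Under symmetric label noise with error rate e and positive class masses, for any two measurable LLM labelers ŷ₀, ŷ₁ : Ω → Fin K evaluated against the same ground truth y and the same reference r, the observed contrast decomposes as A_R(ŷ₁) − A_R(ŷ₀) = a·(A_T(ŷ₁) − A_T(ŷ₀)) + (J(ŷ₁) − J(ŷ₀)), where a = (1−e) − e/(K−1). -/

import Mathlib

open MeasureTheory

/-- True agreement `A_T(ŷ) = μ({ŷ = y})`. -/
noncomputable def trueAgree {Ω : Type*} [MeasurableSpace Ω] {K : ℕ}
    (μ : Measure Ω) (y yhat : Ω → Fin K) : ℝ :=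
  (μ {ω | yhat ω = y ω}).toReal

/-- Reference agreement `A_R(ŷ) = μ({ŷ = r})`. -/
noncomputable def refAgree {Ω : Type*} [MeasurableSpace Ω] {K : ℕ}
    (μ : Measure Ω) (r yhat : Ω → Fin K) : ℝ :=
  (μ {ω | yhat ω = r ω}).toReal

/-- Measurement error `ε(ŷ) = 1 − A_T(ŷ)`. -/
noncomputable def measError {Ω : Type*} [MeasurableSpace Ω] {K : ℕ}
    (μ : Measure Ω) (y yhat : Ω → Fin K) : ℝ :=
  1 - trueAgree μ y yhat

/-- Co-labeling covariance
`J(ŷ) = ∑ₖ ∑ₗ [ μ({ŷ=ℓ}∩{r=ℓ}∩{y=k}) − μ({ŷ=ℓ}∩{y=k})·μ({r=ℓ}∩{y=k}) / μ({y=k}) ]`. -/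
noncomputable def coLabelCov {Ω : Type*} [MeasurableSpace Ω] {K : ℕ}
    (μ : Measure Ω) (y r yhat : Ω → Fin K) : ℝ :=
  ∑ k : Fin K, ∑ l : Fin K,
    ((μ ({ω | yhat ω = l} ∩ {ω | r ω = l} ∩ {ω | y ω = k})).toReal
      - (μ ({ω | yhat ω = l} ∩ {ω | y ω = k})).toReal
          * (μ ({ω | r ω = l} ∩ {ω | y ω = k})).toReal
          / (μ {ω | y ω = k}).toReal)



lemma part_sum {Ω : Type*} [MeasurableSpace Ω] {K : ℕ}
    (μ : Measure Ω) [IsProbabilityMeasure μ]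
    (z : Ω → Fin K) (hz : Measurable z) (s : Set Ω) (hs : MeasurableSet s) :
    (μ s).toReal = ∑ k : Fin K, (μ (s ∩ {ω | z ω = k})).toReal := by
  have hu : s = ⋃ k : Fin K, s ∩ {ω | z ω = k} := by
    ext ω; simp
  have hdisj : Pairwise (Function.onFun Disjoint fun k : Fin K => s ∩ {ω | z ω = k}) := by
    intro a b hab
    refine Set.disjoint_left.2 ?_
    rintro ω ⟨-, ha⟩ ⟨-, hb⟩
    exact hab (ha.symm.trans hb)
  have hm : ∀ k : Fin K, MeasurableSet (s ∩ {ω | z ω = k}) := fun k =>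
    hs.inter (hz (measurableSet_singleton k))
  conv_lhs => rw [hu]
  rw [measure_iUnion hdisj hm, tsum_fintype,
    ENNReal.toReal_sum (fun k _ => measure_ne_top μ _)]

lemma key_identity {Ω : Type*} [MeasurableSpace Ω] {K : ℕ} (hK : 2 ≤ K)
    (e : ℝ)
    (μ : Measure Ω) [IsProbabilityMeasure μ]
    (y r : Ω → Fin K) (hy : Measurable y) (hr : Measurable r)
    (hnoise_diag : ∀ k : Fin K,
      (μ ({ω | r ω = k} ∩ {ω | y ω = k})).toReal
        = (1 - e) * (μ {ω | y ω = k}).toReal)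
    (hnoise_off : ∀ k l : Fin K, l ≠ k →
      (μ ({ω | r ω = l} ∩ {ω | y ω = k})).toReal
        = e / ((K : ℝ) - 1) * (μ {ω | y ω = k}).toReal)
    (hpos : ∀ k : Fin K, 0 < μ {ω | y ω = k})
    (yhat : Ω → Fin K) (hyhat : Measurable yhat) :
    refAgree μ r yhat
      = ((1 - e) - e / ((K : ℝ) - 1)) * trueAgree μ y yhat
        + coLabelCov μ y r yhat + e / ((K : ℝ) - 1) := by
  have hmy : ∀ k : Fin K, MeasurableSet {ω | y ω = k} := fun k =>
    hy (measurableSet_singleton k)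
  have hK1 : (K : ℝ) - 1 ≠ 0 := by
    have h2 : (2 : ℝ) ≤ (K : ℝ) := by exact_mod_cast hK
    linarith
  have hpR : ∀ k : Fin K, (μ {ω | y ω = k}).toReal ≠ 0 := fun k =>
    (ENNReal.toReal_pos (hpos k).ne' (measure_ne_top μ _)).ne'
  have hsR : MeasurableSet {ω | yhat ω = r ω} :=
    measurableSet_eq_fun hyhat hr
  have hAR : refAgree μ r yhat
      = ∑ k : Fin K, ∑ l : Fin K,
          (μ ({ω | yhat ω = l} ∩ {ω | r ω = l} ∩ {ω | y ω = k})).toReal := by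
    rw [refAgree, part_sum μ y hy _ hsR]
    refine Finset.sum_congr rfl fun k _ => ?_
    rw [part_sum μ r hr _ (hsR.inter (hmy k))]
    refine Finset.sum_congr rfl fun l _ => ?_
    have hset : {ω | yhat ω = r ω} ∩ {ω | y ω = k} ∩ {ω | r ω = l}
        = {ω | yhat ω = l} ∩ {ω | r ω = l} ∩ {ω | y ω = k} := by
      ext ω
      simp only [Set.mem_inter_iff, Set.mem_setOf_eq]
      constructor
      · rintro ⟨⟨h1, h2⟩, h3⟩; exact ⟨⟨h3 ▸ h1, h3⟩, h2⟩
      · rintro ⟨⟨h1, h3⟩, h2⟩; exact ⟨⟨h3 ▸ h1, h2⟩, h3⟩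
    rw [hset]
  have hAT : trueAgree μ y yhat
      = ∑ k : Fin K, (μ ({ω | yhat ω = k} ∩ {ω | y ω = k})).toReal := by
    rw [trueAgree, part_sum μ y hy _ (measurableSet_eq_fun hyhat hy)]
    refine Finset.sum_congr rfl fun k _ => ?_
    have hset : {ω | yhat ω = y ω} ∩ {ω | y ω = k}
        = {ω | yhat ω = k} ∩ {ω | y ω = k} := by
      ext ω
      simp only [Set.mem_inter_iff, Set.mem_setOf_eq]
      constructor
      · rintro ⟨h1, h2⟩; exact ⟨h2 ▸ h1, h2⟩
      · rintro ⟨h1, h2⟩; exact ⟨h2 ▸ h1, h2⟩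
    rw [hset]
  have hrow : ∀ k : Fin K,
      ∑ l : Fin K, (μ ({ω | yhat ω = l} ∩ {ω | y ω = k})).toReal
        = (μ {ω | y ω = k}).toReal := by
    intro k
    rw [part_sum μ yhat hyhat _ (hmy k)]
    refine Finset.sum_congr rfl fun l _ => ?_
    have hset : {ω | y ω = k} ∩ {ω | yhat ω = l}
        = {ω | yhat ω = l} ∩ {ω | y ω = k} := Set.inter_comm _ _
    rw [hset]
  have htot : ∑ k : Fin K, (μ {ω | y ω = k}).toReal = 1 := by
    have := part_sum μ y hy Set.univ MeasurableSet.univ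
    simp only [Set.univ_inter, measure_univ, ENNReal.toReal_one] at this
    exact this.symm
  have hsum2 : ∑ k : Fin K, ∑ l : Fin K,
      (μ ({ω | yhat ω = l} ∩ {ω | y ω = k})).toReal
        * (μ ({ω | r ω = l} ∩ {ω | y ω = k})).toReal
        / (μ {ω | y ω = k}).toReal
      = ((1 - e) - e / ((K : ℝ) - 1))
          * ∑ k : Fin K, (μ ({ω | yhat ω = k} ∩ {ω | y ω = k})).toReal
        + e / ((K : ℝ) - 1) := by
    have step : ∀ k : Fin K, ∑ l : Fin K,
        (μ ({ω | yhat ω = l} ∩ {ω | y ω = k})).toReal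
          * (μ ({ω | r ω = l} ∩ {ω | y ω = k})).toReal
          / (μ {ω | y ω = k}).toReal
        = ((1 - e) - e / ((K : ℝ) - 1))
            * (μ ({ω | yhat ω = k} ∩ {ω | y ω = k})).toReal
          + e / ((K : ℝ) - 1) * (μ {ω | y ω = k}).toReal := by
      intro k
      have hterm : ∀ l : Fin K,
          (μ ({ω | yhat ω = l} ∩ {ω | y ω = k})).toReal
            * (μ ({ω | r ω = l} ∩ {ω | y ω = k})).toReal
            / (μ {ω | y ω = k}).toReal
          = (if l = k then ((1 - e) - e / ((K : ℝ) - 1)) else 0)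
              * (μ ({ω | yhat ω = l} ∩ {ω | y ω = k})).toReal
            + e / ((K : ℝ) - 1) * (μ ({ω | yhat ω = l} ∩ {ω | y ω = k})).toReal := by
        intro l
        by_cases hl : l = k
        · subst hl
          rw [hnoise_diag l, if_pos rfl, mul_div_assoc,
            mul_div_cancel_right₀ _ (hpR l)]
          ring
        · rw [hnoise_off k l hl, if_neg hl, mul_div_assoc,
            mul_div_cancel_right₀ _ (hpR k)]
          ring
      rw [Finset.sum_congr rfl fun l _ => hterm l, Finset.sum_add_distrib,
        ← Finset.mul_sum, hrow k]
      simp only [ite_mul, zero_mul, Finset.sum_ite_eq', Finset.mem_univ, if_true]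
    rw [Finset.sum_congr rfl fun k _ => step k, Finset.sum_add_distrib,
      ← Finset.mul_sum, ← Finset.mul_sum, htot, mul_one]
  rw [coLabelCov, hAR, hAT]
  simp only [Finset.sum_sub_distrib]
  rw [hsum2]
  ring

/-- **paired observed contrast identity, Equation (4).** Under
symmetric label noise with error rate `e ∈ [0,1)` and positive class masses, for
labelers `ŷ₀, ŷ₁` against the same `y` and `r`,
`A_R(ŷ₁) − A_R(ŷ₀) = a·(A_T(ŷ₁) − A_T(ŷ₀)) + (J(ŷ₁) − J(ŷ₀))`. -/
theorem paired_observed_contrast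
    {Ω : Type*} [MeasurableSpace Ω] {K : ℕ} (hK : 2 ≤ K)
    (e : ℝ) (he0 : 0 ≤ e) (he1 : e < 1)
    (μ : Measure Ω) [IsProbabilityMeasure μ]
    (y r : Ω → Fin K) (hy : Measurable y) (hr : Measurable r)
    (hnoise_diag : ∀ k : Fin K,
      (μ ({ω | r ω = k} ∩ {ω | y ω = k})).toReal
        = (1 - e) * (μ {ω | y ω = k}).toReal)
    (hnoise_off : ∀ k l : Fin K, l ≠ k →
      (μ ({ω | r ω = l} ∩ {ω | y ω = k})).toReal
        = e / ((K : ℝ) - 1) * (μ {ω | y ω = k}).toReal)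
    (hpos : ∀ k : Fin K, 0 < μ {ω | y ω = k})
    (yhat₀ yhat₁ : Ω → Fin K) (hyhat₀ : Measurable yhat₀) (hyhat₁ : Measurable yhat₁) :
    refAgree μ r yhat₁ - refAgree μ r yhat₀
      = ((1 - e) - e / ((K : ℝ) - 1))
          * (trueAgree μ y yhat₁ - trueAgree μ y yhat₀)
        + (coLabelCov μ y r yhat₁ - coLabelCov μ y r yhat₀) := by
  rw [key_identity hK e μ y r hy hr hnoise_diag hnoise_off hpos yhat₁ hyhat₁,
    key_identity hK e μ y r hy hr hnoise_diag hnoise_off hpos yhat₀ hyhat₀]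
  ring
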